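/- Every graph on at most 4 vertices containing two distinct vertices u and v is uv-sparse if and only if it does not contain the edge uv. In particular, every subgraph of K₄ − uv is uv-sparse. -/

import Mathlib

open scoped Classical

/-- Number of edges of `G` induced by the vertex set `U`. -/
noncomputable def iG {V : Type*} [Fintype V] (G : SimpleGraph V) (U : Finset V) : ℕ :=
  (G.edgeFinset.filter (fun e => ∀ x ∈ e, x ∈ U)).card

/-- The value `val(U) = 2|U| - t_U`. -/
noncomputable def valU {V : Type*} [DecidableEq V] (u v : V) (U : Finset V) : ℤ :=
  2 * U.card - (if U = {u, v} then 4 else if U.card = 2 ∨ U.card = 3 then 3 else 2)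

/-- A family of vertex sets is `uv`-compatible if each member contains `u` and `v`
and has at least three vertices. -/
def UVCompatible {V : Type*} (u v : V) (𝒳 : Finset (Finset V)) : Prop :=
  𝒳.Nonempty ∧ ∀ A ∈ 𝒳, u ∈ A ∧ v ∈ A ∧ 3 ≤ A.card

/-- The value of a `uv`-compatible family. -/
noncomputable def valFam {V : Type*} [DecidableEq V] (u v : V) (𝒳 : Finset (Finset V)) : ℤ :=
  (∑ A ∈ 𝒳, valU u v A) - 2 * ((𝒳.card : ℤ) - 1)

/-- The number of edges of `G` covered by a family of vertex sets. -/
noncomputable def iFam {V : Type*} [Fintype V] (G : SimpleGraph V) (𝒳 : Finset (Finset V)) : ℕ :=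
  (𝒳.biUnion (fun A => G.edgeFinset.filter (fun e => ∀ x ∈ e, x ∈ A))).card

/-- `G` is `uv`-sparse. -/
noncomputable def UVSparse {V : Type*} [Fintype V] [DecidableEq V]
    (G : SimpleGraph V) (u v : V) : Prop :=
  (∀ U : Finset V, 2 ≤ U.card → (iG G U : ℤ) ≤ valU u v U) ∧
  (∀ 𝒳 : Finset (Finset V), UVCompatible u v 𝒳 → (iFam G 𝒳 : ℤ) ≤ valFam u v 𝒳)

/-- `G` is `(2,2)`-sparse. -/
def Sparse22 {V : Type*} [Fintype V] (G : SimpleGraph V) : Prop :=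
  ∀ U : Finset V, 2 ≤ U.card → (iG G U : ℤ) ≤ 2 * U.card - 2

private lemma iG_le_choose {V : Type*} [Fintype V] [DecidableEq V]
    (G : SimpleGraph V) (U : Finset V) : iG G U ≤ U.card.choose 2 := by
  classical
  rw [iG, ← Finset.card_powersetCard 2 U]
  apply Finset.card_le_card_of_injOn (fun e => Finset.univ.filter (fun x => x ∈ e))
  · intro e he
    simp only [Finset.mem_coe] at he ⊢
    simp only [Finset.mem_filter, SimpleGraph.mem_edgeFinset] at he
    obtain ⟨heE, heU⟩ := he
    induction e using Sym2.ind with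
    | _ a b =>
      have hab : a ≠ b := by
        intro h; exact G.not_isDiag_of_mem_edgeSet heE (by simp [h])
      have hset : (Finset.univ.filter (fun x => x ∈ s(a, b))) = {a, b} := by
        ext x; simp [Sym2.mem_iff]
      rw [hset, Finset.mem_powersetCard]
      refine ⟨?_, Finset.card_pair hab⟩
      intro x hx
      rw [← hset, Finset.mem_filter] at hx
      exact heU x hx.2
  · intro e he e' he' h
    simp only [Finset.coe_filter, Set.mem_setOf_eq, SimpleGraph.mem_edgeFinset] at he he'
    induction e using Sym2.ind with
    | _ a b =>
      have hab : a ≠ b := by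
        intro hh; exact G.not_isDiag_of_mem_edgeSet he.1 (by simp [hh])
      have h2 : Finset.univ.filter (fun x => x ∈ s(a, b)) =
          Finset.univ.filter (fun x => x ∈ e') := h
      have ha : a ∈ e' := by
        have : a ∈ Finset.univ.filter (fun x => x ∈ e') := by
          rw [← h2]; simp [Sym2.mem_iff]
        simpa using this
      have hb : b ∈ e' := by
        have : b ∈ Finset.univ.filter (fun x => x ∈ e') := by
          rw [← h2]; simp [Sym2.mem_iff]
        simpa using this
      exact ((Sym2.mem_and_mem_iff hab).mp ⟨ha, hb⟩).symm

private lemma iG_le_choose_sub {V : Type*} [Fintype V] [DecidableEq V]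
    (G : SimpleGraph V) {u v : V} (huv : u ≠ v) (hG : ¬ G.Adj u v)
    {U : Finset V} (hu : u ∈ U) (hv : v ∈ U) : iG G U ≤ U.card.choose 2 - 1 := by
  classical
  have hmem : ({u, v} : Finset V) ∈ U.powersetCard 2 := by
    rw [Finset.mem_powersetCard]
    refine ⟨?_, Finset.card_pair huv⟩
    simp [Finset.insert_subset_iff, hu, hv]
  rw [iG, ← Finset.card_powersetCard 2 U, ← Finset.card_erase_of_mem hmem]
  apply Finset.card_le_card_of_injOn (fun e => Finset.univ.filter (fun x => x ∈ e))
  · intro e he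
    simp only [Finset.mem_coe] at he ⊢
    simp only [Finset.mem_filter, SimpleGraph.mem_edgeFinset] at he
    obtain ⟨heE, heU⟩ := he
    induction e using Sym2.ind with
    | _ a b =>
      have hab : a ≠ b := by
        intro h; exact G.not_isDiag_of_mem_edgeSet heE (by simp [h])
      have hset : (Finset.univ.filter (fun x => x ∈ s(a, b))) = {a, b} := by
        ext x; simp [Sym2.mem_iff]
      rw [hset]
      rw [Finset.mem_erase, Finset.mem_powersetCard]
      refine ⟨?_, ?_, Finset.card_pair hab⟩
      · intro h
        have hu' : u ∈ ({a, b} : Finset V) := h ▸ (by simp)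
        have hv' : v ∈ ({a, b} : Finset V) := h ▸ (by simp)
        have hue : u ∈ s(a, b) := by simpa [Sym2.mem_iff] using hu'
        have hve : v ∈ s(a, b) := by simpa [Sym2.mem_iff] using hv'
        have : s(a, b) = s(u, v) := (Sym2.mem_and_mem_iff huv).mp ⟨hue, hve⟩
        rw [this] at heE
        exact hG heE
      · intro x hx
        rw [← hset, Finset.mem_filter] at hx
        exact heU x hx.2
  · intro e he e' he' h
    simp only [Finset.coe_filter, Set.mem_setOf_eq, SimpleGraph.mem_edgeFinset] at he he'
    induction e using Sym2.ind with
    | _ a b =>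
      have hab : a ≠ b := by
        intro hh; exact G.not_isDiag_of_mem_edgeSet he.1 (by simp [hh])
      have h2 : Finset.univ.filter (fun x => x ∈ s(a, b)) =
          Finset.univ.filter (fun x => x ∈ e') := h
      have ha : a ∈ e' := by
        have : a ∈ Finset.univ.filter (fun x => x ∈ e') := by
          rw [← h2]; simp [Sym2.mem_iff]
        simpa using this
      have hb : b ∈ e' := by
        have : b ∈ Finset.univ.filter (fun x => x ∈ e') := by
          rw [← h2]; simp [Sym2.mem_iff]
        simpa using this
      exact ((Sym2.mem_and_mem_iff hab).mp ⟨ha, hb⟩).symm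

private lemma iG_pos {V : Type*} [Fintype V] (G : SimpleGraph V) {u v : V} {U : Finset V}
    (hadj : G.Adj u v) (hu : u ∈ U) (hv : v ∈ U) : 0 < iG G U := by
  rw [iG, Finset.card_pos]
  refine ⟨s(u, v), Finset.mem_filter.mpr ⟨SimpleGraph.mem_edgeFinset.mpr hadj, ?_⟩⟩
  intro x hx
  rcases Sym2.mem_iff.mp hx with h | h <;> subst h <;> assumption

private lemma iFam_le_iG_univ {V : Type*} [Fintype V] (G : SimpleGraph V)
    (𝒳 : Finset (Finset V)) : iFam G 𝒳 ≤ iG G Finset.univ := by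
  rw [iFam, iG]
  apply Finset.card_le_card
  intro e he
  rw [Finset.mem_biUnion] at he
  obtain ⟨A, _, hA⟩ := he
  rw [Finset.mem_filter] at hA ⊢
  exact ⟨hA.1, fun x _ => Finset.mem_univ x⟩

private lemma iFam_le_sum {V : Type*} [Fintype V] (G : SimpleGraph V)
    (𝒳 : Finset (Finset V)) : iFam G 𝒳 ≤ ∑ A ∈ 𝒳, iG G A := by
  rw [iFam]
  exact Finset.card_biUnion_le

theorem uvSparse_iff_not_adj_of_card_le_four {V : Type*} [Fintype V] [DecidableEq V]
    (hV : Fintype.card V ≤ 4) (u v : V) (huv : u ≠ v) :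
    (∀ G : SimpleGraph V, (UVSparse G u v ↔ ¬ G.Adj u v)) ∧
    (∀ H : SimpleGraph V, H ≤ (⊤ : SimpleGraph V).deleteEdges {s(u, v)} →
      UVSparse H u v) := by
  classical
  have hmain : ∀ G : SimpleGraph V, (UVSparse G u v ↔ ¬ G.Adj u v) := by
    intro G
    constructor
    · intro hs hadj
      have h1 := hs.1 {u, v} (by rw [Finset.card_pair huv])
      have hval : valU u v ({u, v} : Finset V) = 0 := by
        rw [valU, if_pos rfl, Finset.card_pair huv]; norm_num
      have hpos : 0 < iG G ({u, v} : Finset V) := iG_pos G hadj (by simp) (by simp)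
      rw [hval] at h1
      omega
    · intro hG
      constructor
      · intro U hU2
        have hU4 : U.card ≤ 4 := le_trans (Finset.card_le_univ U) hV
        by_cases hU : U = {u, v}
        · have hcard : U.card = 2 := by rw [hU, Finset.card_pair huv]
          have hle := iG_le_choose_sub G huv hG (U := U) (by rw [hU]; simp) (by rw [hU]; simp)
          rw [hcard] at hle
          norm_num at hle
          rw [valU, if_pos hU, hcard]
          push_cast
          omega
        · have hle := iG_le_choose G U
          rw [valU, if_neg hU]
          obtain hc | hc | hc : U.card = 2 ∨ U.card = 3 ∨ U.card = 4 := by omega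
          · rw [hc] at hle ⊢
            rw [show Nat.choose 2 2 = 1 from by decide] at hle
            norm_num
            omega
          · rw [hc] at hle ⊢
            rw [show Nat.choose 3 2 = 3 from by decide] at hle
            norm_num
            omega
          · rw [hc] at hle ⊢
            rw [show Nat.choose 4 2 = 6 from by decide] at hle
            norm_num
            omega
      · rintro 𝒳 ⟨hne, hmem⟩
        have hclass : ∀ A ∈ 𝒳, (A.card = 3 ∧ valU u v A = 3) ∨ (A.card = 4 ∧ valU u v A = 6) := by
          intro A hA
          obtain ⟨hu, hv, h3⟩ := hmem A hA
          have h4 : A.card ≤ 4 := le_trans (Finset.card_le_univ A) hV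
          have hA' : A ≠ {u, v} := by
            intro h; rw [h, Finset.card_pair huv] at h3; omega
          obtain hc | hc : A.card = 3 ∨ A.card = 4 := by omega
          · left; refine ⟨hc, ?_⟩
            rw [valU, if_neg hA', hc]; norm_num
          · right; refine ⟨hc, ?_⟩
            rw [valU, if_neg hA', hc]; norm_num
        have hval3 : ∀ A ∈ 𝒳, (3 : ℤ) ≤ valU u v A := by
          intro A hA
          rcases hclass A hA with ⟨_, h⟩ | ⟨_, h⟩ <;> rw [h] <;> norm_num
        have hk1 : 1 ≤ 𝒳.card := Finset.card_pos.mpr hne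
        rw [valFam]
        by_cases h4 : ∃ A ∈ 𝒳, A.card = 4
        · obtain ⟨A₀, hA₀, hc4⟩ := h4
          have hV4 : Fintype.card V = 4 := by
            have := Finset.card_le_univ A₀
            omega
          have hA₀univ : A₀ = Finset.univ := Finset.eq_univ_of_card A₀ (by rw [hc4, hV4])
          have hif : iFam G 𝒳 ≤ iG G A₀ := hA₀univ ▸ iFam_le_iG_univ G 𝒳
          obtain ⟨hu0, hv0, _⟩ := hmem A₀ hA₀
          have hiG : iG G A₀ ≤ 5 := by
            have := iG_le_choose_sub G huv hG hu0 hv0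
            rw [hc4] at this
            norm_num at this
            exact this
          have hvalA₀ : valU u v A₀ = 6 := by
            rcases hclass A₀ hA₀ with ⟨h, _⟩ | ⟨_, h⟩
            · omega
            · exact h
          have hsum : (6 : ℤ) + 3 * ((𝒳.card : ℤ) - 1) ≤ ∑ A ∈ 𝒳, valU u v A := by
            rw [← Finset.sum_erase_add 𝒳 _ hA₀, hvalA₀]
            have hcard_erase : ((𝒳.erase A₀).card : ℤ) = (𝒳.card : ℤ) - 1 := by
              rw [Finset.card_erase_of_mem hA₀]
              push_cast [Nat.cast_sub hk1]
              ring
            have := Finset.card_nsmul_le_sum (𝒳.erase A₀) (valU u v) 3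
              (fun A hA => hval3 A (Finset.mem_of_mem_erase hA))
            rw [nsmul_eq_mul] at this
            rw [hcard_erase] at this
            linarith
          have : (iFam G 𝒳 : ℤ) ≤ 5 := by exact_mod_cast le_trans hif hiG
          linarith
        · push_neg at h4
          have hc3 : ∀ A ∈ 𝒳, A.card = 3 := by
            intro A hA
            rcases hclass A hA with ⟨h, _⟩ | ⟨h, _⟩
            · exact h
            · exact absurd h (h4 A hA)
          -- card 𝒳 ≤ 2
          have hk2 : 𝒳.card ≤ 2 := by
            have hinj : 𝒳.card ≤ ((Finset.univ \ {u, v} : Finset V).powersetCard 1).card := by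
              apply Finset.card_le_card_of_injOn (fun A => A \ {u, v})
              · intro A hA
                obtain ⟨hu, hv, _⟩ := hmem A hA
                simp only [Finset.mem_coe]
                rw [Finset.mem_powersetCard]
                constructor
                · intro x hx
                  rw [Finset.mem_sdiff] at hx ⊢
                  exact ⟨Finset.mem_univ x, hx.2⟩
                · have hsub : ({u, v} : Finset V) ⊆ A := by
                    intro x hx
                    rcases Finset.mem_insert.mp hx with h | h
                    · subst h; exact hu
                    · rw [Finset.mem_singleton] at h; subst h; exact hv
                  rw [Finset.card_sdiff_of_subset hsub, Finset.card_pair huv, hc3 A hA]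
              · intro A hA B hB h
                have h' : A \ {u, v} = B \ {u, v} := h
                obtain ⟨huA, hvA, _⟩ := hmem A hA
                obtain ⟨huB, hvB, _⟩ := hmem B hB
                have hsubA : ({u, v} : Finset V) ⊆ A := by
                  simp [Finset.insert_subset_iff, huA, hvA]
                have hsubB : ({u, v} : Finset V) ⊆ B := by
                  simp [Finset.insert_subset_iff, huB, hvB]
                calc A = A \ {u, v} ∪ {u, v} := (Finset.sdiff_union_of_subset hsubA).symm
                  _ = B \ {u, v} ∪ {u, v} := by rw [h']
                  _ = B := Finset.sdiff_union_of_subset hsubB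
            rw [Finset.card_powersetCard, Nat.choose_one_right,
              Finset.card_sdiff_of_subset (Finset.subset_univ _), Finset.card_univ,
              Finset.card_pair huv] at hinj
            omega
          have hiFam : iFam G 𝒳 ≤ 2 * 𝒳.card := by
            apply le_trans (iFam_le_sum G 𝒳)
            calc ∑ A ∈ 𝒳, iG G A ≤ ∑ _A ∈ 𝒳, 2 := by
                  apply Finset.sum_le_sum
                  intro A hA
                  obtain ⟨hu, hv, _⟩ := hmem A hA
                  have := iG_le_choose_sub G huv hG hu hv
                  rw [hc3 A hA] at this
                  norm_num at this
                  exact this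
              _ = 2 * 𝒳.card := by rw [Finset.sum_const, smul_eq_mul, mul_comm]
          have hsum : ∑ A ∈ 𝒳, valU u v A = 3 * (𝒳.card : ℤ) := by
            rw [Finset.sum_congr rfl (fun A hA => ((hclass A hA).resolve_right
              (fun h => h4 A hA h.1)).2), Finset.sum_const, nsmul_eq_mul]
            ring
          rw [hsum]
          have : (iFam G 𝒳 : ℤ) ≤ 2 * (𝒳.card : ℤ) := by exact_mod_cast hiFam
          have h2 : (𝒳.card : ℤ) ≤ 2 := by exact_mod_cast hk2
          linarith
  refine ⟨hmain, fun H hle => (hmain H).mpr ?_⟩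
  intro hadj
  have := hle hadj
  rw [SimpleGraph.deleteEdges_adj] at this
  simp at this
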